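/- Let ℓ ≥ 3 and let a, b, c be nonnegative integers (the multiplicities of a triangle multigraph T_{a,b,c}). If a + b + c ≥ 2ℓ − 2 and every vertex degree is at least ℓ − 1 (i.e., a + b ≥ ℓ − 1, b + c ≥ ℓ − 1, a + c ≥ ℓ − 1), then for every triple (β₀, β₁, β₂) of residues mod 2ℓ with βᵢ ≡ (sum of the two multiplicities at vertex i) mod 2 and β₀ + β₁ + β₂ ≡ 0 (mod 2ℓ), there exist integers x₀, x₁, x₂ with |xᵢ| ≤ μᵢ, xᵢ ≡ μᵢ (mod 2) (where μ₀ = a, μ₁ = b, μ₂ = c are the multiplicities of edges [v₀v₁], [v₁v₂], [v₂v₀]), satisfying xᵢ − xᵢ₋₁ ≡ βᵢ (mod 2ℓ) for i = 0, 1, 2 (indices mod 3). -/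

import Mathlib

/-- residue of `s - 2k` modulo `2L`, as a natural number (valid for `k < L`, `s < 2L`). -/
def rres (L s k : ℕ) : ℕ := if 2*k ≤ s then s - 2*k else s + 2*L - 2*k

lemma rres_spec (L s k : ℕ) :
    (rres L s k = s - 2*k ∧ 2*k ≤ s) ∨ (rres L s k = s + 2*L - 2*k ∧ s < 2*k) := by
  unfold rres; split_ifs with h
  · exact Or.inl ⟨rfl, h⟩
  · exact Or.inr ⟨rfl, by omega⟩

lemma bad_card (L b s : ℕ) (hs : s < 2*L) (hp : s % 2 = b % 2)
    (K : Finset ℕ) (hK : ∀ k ∈ K, k < L) :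
    (K.filter fun k => b < min (rres L s k) (2*L - rres L s k)).card ≤ L - 1 - b := by
  classical
  calc (K.filter fun k => b < min (rres L s k) (2*L - rres L s k)).card
      ≤ (Finset.range (L - 1 - b)).card := ?_
    _ = L - 1 - b := Finset.card_range _
  refine Finset.card_le_card_of_injOn (fun k => (rres L s k - b)/2 - 1) ?_ ?_
  · intro k hk
    simp only [Finset.mem_coe, Finset.mem_filter] at hk
    obtain ⟨hkK, hbad⟩ := hk
    have hkL := hK k hkK
    simp only [Finset.mem_coe, Finset.mem_range]
    rcases rres_spec L s k with ⟨h1, h2⟩ | ⟨h1, h2⟩ <;> omega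
  · intro k hk k' hk' hf
    have hf' : (rres L s k - b)/2 - 1 = (rres L s k' - b)/2 - 1 := hf
    simp only [Finset.coe_filter, Set.mem_setOf_eq] at hk hk'
    obtain ⟨hkK, hbad⟩ := hk
    obtain ⟨hkK', hbad'⟩ := hk'
    have hkL := hK k hkK
    have hkL' := hK k' hkK'
    rcases rres_spec L s k with ⟨h1, h2⟩ | ⟨h1, h2⟩ <;>
      rcases rres_spec L s k' with ⟨h1', h2'⟩ | ⟨h1', h2'⟩ <;> omega

lemma exists_good (L a b c s t : ℕ) (hL : 3 ≤ L) (hs : s < 2*L) (ht : t < 2*L)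
    (hps : s % 2 = b % 2) (hpt : t % 2 = c % 2)
    (hsum : 2*L - 2 ≤ a + b + c) (h0 : L - 1 ≤ a + c) (h1 : L - 1 ≤ a + b)
    (h2 : L - 1 ≤ b + c) :
    ∃ k, k ≤ a ∧ k < L ∧ min (rres L s k) (2*L - rres L s k) ≤ b ∧
      min (rres L t k) (2*L - rres L t k) ≤ c := by
  classical
  set K : Finset ℕ := Finset.range (min a (L-1) + 1) with hKdef
  have hK : ∀ k ∈ K, k < L := by
    intro k hk; rw [hKdef, Finset.mem_range] at hk; omega
  set B₁ := K.filter (fun k => b < min (rres L s k) (2*L - rres L s k)) with hB1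
  set B₂ := K.filter (fun k => c < min (rres L t k) (2*L - rres L t k)) with hB2
  have c1 : B₁.card ≤ L - 1 - b := bad_card L b s hs hps K hK
  have c2 : B₂.card ≤ L - 1 - c := bad_card L c t ht hpt K hK
  have hcard : (B₁ ∪ B₂).card < K.card := by
    have hu := Finset.card_union_le B₁ B₂
    rw [hKdef, Finset.card_range]
    omega
  have hsub : ¬ (K ⊆ B₁ ∪ B₂) := fun hss => absurd (Finset.card_le_card hss) (by omega)
  obtain ⟨k, hkK, hkB⟩ := Finset.not_subset.mp hsub
  refine ⟨k, ?_, hK k hkK, ?_, ?_⟩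
  · rw [hKdef, Finset.mem_range] at hkK; omega
  · by_contra hb
    exact hkB (Finset.mem_union_left _ (Finset.mem_filter.mpr ⟨hkK, by omega⟩))
  · by_contra hb
    exact hkB (Finset.mem_union_right _ (Finset.mem_filter.mpr ⟨hkK, by omega⟩))

lemma pick (ℓ b r : ℕ) (y : ℤ) (hr : r < 2*ℓ)
    (hmin : min r (2*ℓ - r) ≤ b) (hpar : r % 2 = b % 2)
    (hmod : (2*(ℓ:ℤ)) ∣ y - (r:ℤ)) :
    ∃ x : ℤ, |x| ≤ (b:ℤ) ∧ x ≡ (b:ℤ) [ZMOD 2] ∧ x ≡ y [ZMOD 2*(ℓ:ℤ)] := by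
  by_cases h : r ≤ b
  · refine ⟨(r:ℤ), ?_, ?_, ?_⟩
    · rw [abs_le]; omega
    · show (r:ℤ) % 2 = (b:ℤ) % 2
      omega
    · exact (Int.modEq_iff_dvd.mpr hmod).symm.symm
  · refine ⟨(r:ℤ) - 2*ℓ, ?_, ?_, ?_⟩
    · rw [abs_le]; omega
    · show ((r:ℤ) - 2*ℓ) % 2 = (b:ℤ) % 2
      omega
    · refine Int.modEq_iff_dvd.mpr ?_
      obtain ⟨q, hq⟩ := hmod
      exact ⟨q + 1, by linear_combination hq⟩

theorem stmt_18 (ℓ a b c : ℕ) (hℓ : 3 ≤ ℓ)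
    (hsum : 2 * ℓ - 2 ≤ a + b + c)
    (hd0 : ℓ - 1 ≤ a + c) (hd1 : ℓ - 1 ≤ a + b) (hd2 : ℓ - 1 ≤ b + c)
    (β₀ β₁ β₂ : ℤ)
    (hβ0 : β₀ ≡ ((a : ℤ) + c) [ZMOD 2])
    (hβ1 : β₁ ≡ ((a : ℤ) + b) [ZMOD 2])
    (hβ2 : β₂ ≡ ((b : ℤ) + c) [ZMOD 2])
    (hβsum : β₀ + β₁ + β₂ ≡ 0 [ZMOD 2 * ℓ]) :
    ∃ x₀ x₁ x₂ : ℤ,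
      |x₀| ≤ a ∧ x₀ ≡ (a : ℤ) [ZMOD 2] ∧
      |x₁| ≤ b ∧ x₁ ≡ (b : ℤ) [ZMOD 2] ∧
      |x₂| ≤ c ∧ x₂ ≡ (c : ℤ) [ZMOD 2] ∧
      x₀ - x₂ ≡ β₀ [ZMOD 2 * ℓ] ∧
      x₁ - x₀ ≡ β₁ [ZMOD 2 * ℓ] ∧
      x₂ - x₁ ≡ β₂ [ZMOD 2 * ℓ] := by
  have hNne : (2*(ℓ:ℤ)) ≠ 0 := by omega
  have hNpos : (0:ℤ) < 2*(ℓ:ℤ) := by omega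
  obtain ⟨s, hsZ⟩ : ∃ s : ℕ, (s:ℤ) = ((a:ℤ) + β₁) % (2*(ℓ:ℤ)) :=
    ⟨(((a:ℤ) + β₁) % (2*(ℓ:ℤ))).toNat, Int.toNat_of_nonneg (Int.emod_nonneg _ hNne)⟩
  obtain ⟨t, htZ⟩ : ∃ t : ℕ, (t:ℤ) = ((a:ℤ) - β₀) % (2*(ℓ:ℤ)) :=
    ⟨(((a:ℤ) - β₀) % (2*(ℓ:ℤ))).toNat, Int.toNat_of_nonneg (Int.emod_nonneg _ hNne)⟩
  have hslt : (s:ℤ) < 2*(ℓ:ℤ) := by rw [hsZ]; exact Int.emod_lt_of_pos _ hNpos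
  have htlt : (t:ℤ) < 2*(ℓ:ℤ) := by rw [htZ]; exact Int.emod_lt_of_pos _ hNpos
  have hsN : s < 2*ℓ := by omega
  have htN : t < 2*ℓ := by omega
  have hdvd2 : (2:ℤ) ∣ (2*(ℓ:ℤ)) := ⟨(ℓ:ℤ), rfl⟩
  have es : (s:ℤ) % 2 = ((a:ℤ) + β₁) % 2 := by rw [hsZ]; exact Int.emod_emod_of_dvd _ hdvd2
  have et : (t:ℤ) % 2 = ((a:ℤ) - β₀) % 2 := by rw [htZ]; exact Int.emod_emod_of_dvd _ hdvd2
  have d1 : (2:ℤ) ∣ ((a:ℤ) + b) - β₁ := hβ1.dvd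
  have d0 : (2:ℤ) ∣ ((a:ℤ) + c) - β₀ := hβ0.dvd
  have hps : s % 2 = b % 2 := by omega
  have hpt : t % 2 = c % 2 := by omega
  obtain ⟨k, hka, hkL, hgb, hgc⟩ :=
    exists_good ℓ a b c s t hℓ hsN htN hps hpt hsum hd0 hd1 hd2
  have hr1 := rres_spec ℓ s k
  have hr2 := rres_spec ℓ t k
  have hr1lt : rres ℓ s k < 2*ℓ := by rcases hr1 with ⟨e1,e2⟩|⟨e1,e2⟩ <;> omega
  have hr2lt : rres ℓ t k < 2*ℓ := by rcases hr2 with ⟨e1,e2⟩|⟨e1,e2⟩ <;> omega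
  have hp1 : rres ℓ s k % 2 = b % 2 := by rcases hr1 with ⟨e1,e2⟩|⟨e1,e2⟩ <;> omega
  have hp2 : rres ℓ t k % 2 = c % 2 := by rcases hr2 with ⟨e1,e2⟩|⟨e1,e2⟩ <;> omega
  obtain ⟨q1, hq1⟩ : (2*(ℓ:ℤ)) ∣ ((a:ℤ) + β₁) - s :=
    ⟨((a:ℤ)+β₁)/(2*(ℓ:ℤ)), by rw [hsZ, Int.emod_def]; ring⟩
  obtain ⟨q2, hq2⟩ : (2*(ℓ:ℤ)) ∣ ((a:ℤ) - β₀) - t :=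
    ⟨((a:ℤ)-β₀)/(2*(ℓ:ℤ)), by rw [htZ, Int.emod_def]; ring⟩
  have hm1 : (2*(ℓ:ℤ)) ∣ (((a:ℤ) - 2*k + β₁) - (rres ℓ s k : ℤ)) := by
    rcases hr1 with ⟨e1,e2⟩|⟨e1,e2⟩
    · have hcast : ((rres ℓ s k : ℤ)) = (s:ℤ) - 2*k := by omega
      exact ⟨q1, by rw [hcast]; linear_combination hq1⟩
    · have hcast : ((rres ℓ s k : ℤ)) = (s:ℤ) + 2*ℓ - 2*k := by omega
      exact ⟨q1 - 1, by rw [hcast]; linear_combination hq1⟩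
  have hm2 : (2*(ℓ:ℤ)) ∣ (((a:ℤ) - 2*k - β₀) - (rres ℓ t k : ℤ)) := by
    rcases hr2 with ⟨e1,e2⟩|⟨e1,e2⟩
    · have hcast : ((rres ℓ t k : ℤ)) = (t:ℤ) - 2*k := by omega
      exact ⟨q2, by rw [hcast]; linear_combination hq2⟩
    · have hcast : ((rres ℓ t k : ℤ)) = (t:ℤ) + 2*ℓ - 2*k := by omega
      exact ⟨q2 - 1, by rw [hcast]; linear_combination hq2⟩
  obtain ⟨x₁, hx1abs, hx1par, hx1mod⟩ :=
    pick ℓ b (rres ℓ s k) ((a:ℤ) - 2*k + β₁) hr1lt hgb hp1 hm1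
  obtain ⟨x₂, hx2abs, hx2par, hx2mod⟩ :=
    pick ℓ c (rres ℓ t k) ((a:ℤ) - 2*k - β₀) hr2lt hgc hp2 hm2
  refine ⟨(a:ℤ) - 2*k, x₁, x₂, ?_, ?_, hx1abs, hx1par, hx2abs, hx2par, ?_, ?_, ?_⟩
  · rw [abs_le]; omega
  · show ((a:ℤ) - 2*k) % 2 = (a:ℤ) % 2
    omega
  · refine Int.modEq_iff_dvd.mpr ?_
    have h := hx2mod.dvd
    have e : β₀ - ((a:ℤ) - 2*k - x₂) = -(((a:ℤ) - 2*k - β₀) - x₂) := by ring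
    rw [e]; exact dvd_neg.mpr h
  · refine Int.modEq_iff_dvd.mpr ?_
    have h := hx1mod.dvd
    have e : β₁ - (x₁ - ((a:ℤ) - 2*k)) = ((a:ℤ) - 2*k + β₁) - x₁ := by ring
    rw [e]; exact h
  · refine Int.modEq_iff_dvd.mpr ?_
    obtain ⟨qA, hA⟩ := hx1mod.dvd
    obtain ⟨qB, hB⟩ := hx2mod.dvd
    obtain ⟨qC, hC⟩ := hβsum.dvd
    exact ⟨-qC - qA + qB, by linear_combination -hC - hA + hB⟩
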